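/- For every m ≥ 1, every l ∈ ℕ, every y ∈ ℝ^m, and every u ∈ (0,1): ∑_{a ∈ ℕ^m, a₁+⋯+a_m = l} He_a(y)² / l! ≤ u^{−l} · (1 − u²)^{−m/2} · exp(u·‖y‖₂² / (1 + u)). -/

import Mathlib

open scoped BigOperators

/-- Probabilists' Hermite polynomials: `He 0 = 1`, `He 1 = id`,
`He (a+1) x = x * He a x - a * He (a-1) x`. -/
noncomputable def He : ℕ → ℝ → ℝ
  | 0, _ => 1
  | 1, x => x
  | (n + 2), x => x * He (n + 1) x - ((n : ℝ) + 1) * He n x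

lemma He_succ : ∀ (n : ℕ) (x : ℝ), He (n + 1) x = x * He n x - n * He (n - 1) x
  | 0, x => by simp [He]
  | (n+1), x => by simp [He]

/-- polynomial-ness -/
def RPoly (f : ℝ → ℝ) : Prop := ∃ p : Polynomial ℝ, ∀ x, f x = p.eval x

lemma He_rpoly : ∀ n, RPoly (He n)
  | 0 => ⟨1, by simp [He]⟩
  | 1 => ⟨Polynomial.X, by simp [He]⟩
  | (n+2) => by
      obtain ⟨p, hp⟩ := He_rpoly (n+1)
      obtain ⟨q, hq⟩ := He_rpoly n
      exact ⟨Polynomial.X * p - Polynomial.C ((n : ℝ)+1) * q, fun x => by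
        simp [He, hp, hq]⟩

lemma RPoly.mul {f g} (hf : RPoly f) (hg : RPoly g) : RPoly (fun x => f x * g x) := by
  obtain ⟨p, hp⟩ := hf; obtain ⟨q, hq⟩ := hg
  exact ⟨p * q, fun x => by simp [hp, hq]⟩

lemma RPoly.add {f g} (hf : RPoly f) (hg : RPoly g) : RPoly (fun x => f x + g x) := by
  obtain ⟨p, hp⟩ := hf; obtain ⟨q, hq⟩ := hg
  exact ⟨p + q, fun x => by simp [hp, hq]⟩

lemma RPoly.sub {f g} (hf : RPoly f) (hg : RPoly g) : RPoly (fun x => f x - g x) := by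
  obtain ⟨p, hp⟩ := hf; obtain ⟨q, hq⟩ := hg
  exact ⟨p - q, fun x => by simp [hp, hq]⟩

lemma RPoly.const (c : ℝ) : RPoly (fun _ => c) := ⟨Polynomial.C c, by simp⟩

lemma RPoly.const_mul {f} (hf : RPoly f) (c : ℝ) : RPoly (fun x => c * f x) :=
  (RPoly.const c).mul hf

lemma RPoly.id' : RPoly (fun x => x) := ⟨Polynomial.X, by simp⟩

lemma RPoly.sum {s : Finset ℕ} {f : ℕ → ℝ → ℝ} (hf : ∀ n ∈ s, RPoly (f n)) :
    RPoly (fun x => ∑ n ∈ s, f n x) := by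
  classical
  induction s using Finset.induction with
  | empty => exact ⟨0, by simp⟩
  | @insert a s' hx ih =>
      simp only [Finset.sum_insert hx]
      exact (hf a (by simp)).add (ih fun n hn => hf n (by simp [hn]))

lemma He_hasDerivAt : ∀ (n : ℕ) (x : ℝ), HasDerivAt (He n) (n * He (n-1) x) x
  | 0, x => by simpa [He] using (hasDerivAt_const x (1:ℝ)).congr_deriv (by norm_num)
  | 1, x => by simpa [He] using hasDerivAt_id' x
  | (n+2), x => by
      have h1 := He_hasDerivAt (n+1) x
      have h2 := He_hasDerivAt n x
      have h1' : HasDerivAt (He (n+1)) (((n:ℝ)+1) * He n x) x := by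
        convert h1 using 1; simp
      have : HasDerivAt (fun y => y * He (n+1) y - ((n:ℝ)+1) * He n y)
          (1 * He (n+1) x + x * (((n:ℝ)+1) * He n x) - ((n:ℝ)+1) * ((n:ℝ) * He (n-1) x)) x :=
        ((hasDerivAt_id x).mul h1').sub (h2.const_mul ((n:ℝ)+1))
      have heq : (fun y => y * He (n+1) y - ((n:ℝ)+1) * He n y) = He (n+2) := by
        funext y; simp [He]
      rw [heq] at this
      convert this using 1
      rw [show n+2-1 = n+1 from rfl, He_succ n x]
      push_cast
      ring

open MeasureTheory Real Filter

lemma monomial_gauss_integrable (k : ℕ) {c : ℝ} (hc : 0 < c) :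
    Integrable fun s : ℝ => s ^ k * Real.exp (-c * s ^ 2) := by
  have h := integrable_rpow_mul_exp_neg_mul_sq hc
    (s := (k : ℝ)) (lt_of_lt_of_le neg_one_lt_zero (Nat.cast_nonneg k))
  simpa [Real.rpow_natCast] using h

lemma poly_gauss_integrable0 (q : Polynomial ℝ) {c : ℝ} (hc : 0 < c) :
    Integrable fun s : ℝ => q.eval s * Real.exp (-c * s ^ 2) := by
  have : (fun s : ℝ => q.eval s * Real.exp (-c * s ^ 2))
      = fun s => ∑ k ∈ Finset.range (q.natDegree + 1),
          q.coeff k * (s ^ k * Real.exp (-c * s ^ 2)) := by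
    funext s
    rw [Polynomial.eval_eq_sum_range, Finset.sum_mul]
    congr 1 with k; ring
  rw [this]
  exact integrable_finset_sum _ fun k _ => (monomial_gauss_integrable k hc).const_mul _

lemma rpoly_gauss_integrable {f : ℝ → ℝ} (hf : RPoly f) {c : ℝ} (hc : 0 < c) (d : ℝ) :
    Integrable fun t : ℝ => f t * Real.exp (-c * (t - d) ^ 2) := by
  obtain ⟨p, hp⟩ := hf
  have key := (poly_gauss_integrable0 (p.comp (Polynomial.X + Polynomial.C d)) hc).comp_sub_right d
  refine key.congr (Eventually.of_forall fun t => ?_)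
  simp [Polynomial.eval_comp, hp]

lemma poly_gauss_tendsto_atTop (q : Polynomial ℝ) {c : ℝ} (hc : 0 < c) :
    Tendsto (fun s : ℝ => q.eval s * Real.exp (-c * s ^ 2)) atTop (nhds 0) := by
  have : (fun s : ℝ => q.eval s * Real.exp (-c * s ^ 2))
      = fun s => ∑ k ∈ Finset.range (q.natDegree + 1),
          q.coeff k * (s ^ k * Real.exp (-c * s ^ 2)) := by
    funext s
    rw [Polynomial.eval_eq_sum_range, Finset.sum_mul]
    congr 1 with k; ring
  rw [this]
  have h0 : Tendsto (fun s : ℝ => ∑ k ∈ Finset.range (q.natDegree + 1),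
      q.coeff k * (s ^ k * Real.exp (-c * s ^ 2))) atTop
      (nhds (∑ k ∈ Finset.range (q.natDegree + 1), (0:ℝ))) := by
    refine tendsto_finset_sum _ fun k _ => ?_
    have hlim : Tendsto (fun s : ℝ => s ^ k * Real.exp (-c * s ^ 2)) atTop (nhds 0) := by
      have ho := (rpow_mul_exp_neg_mul_sq_isLittleO_exp_neg hc (k : ℝ)).isBigO
      have hexp : Tendsto (fun x : ℝ => Real.exp (-(1/2) * x)) atTop (nhds 0) := by
        have h1 : Tendsto (fun x : ℝ => (1/2 : ℝ) * x) atTop atTop :=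
          Filter.Tendsto.const_mul_atTop (by norm_num) tendsto_id
        simp only [neg_mul]
        exact Real.tendsto_exp_atBot.comp (tendsto_neg_atTop_atBot.comp h1)
      have := ho.trans_tendsto hexp
      refine Tendsto.congr (fun s => ?_) this
      rw [Real.rpow_natCast]
    simpa using hlim.const_mul (q.coeff k)
  simpa using h0

lemma RPoly.linear (d : ℝ) : RPoly (fun t => t - d) :=
  ⟨Polynomial.X - Polynomial.C d, by simp⟩

lemma rpoly_gauss_tendsto_atTop {f : ℝ → ℝ} (hf : RPoly f) {c : ℝ} (hc : 0 < c) (d : ℝ) :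
    Tendsto (fun t : ℝ => f t * Real.exp (-c * (t - d) ^ 2)) atTop (nhds 0) := by
  obtain ⟨p, hp⟩ := hf
  have h1 : Tendsto (fun t : ℝ => t + -d) atTop atTop :=
    tendsto_atTop_add_const_right atTop (-d) tendsto_id
  have := (poly_gauss_tendsto_atTop (p.comp (Polynomial.X + Polynomial.C d)) hc).comp h1
  refine this.congr fun t => ?_
  simp [Function.comp, Polynomial.eval_comp, hp, sub_eq_add_neg]

lemma rpoly_gauss_tendsto_atBot {f : ℝ → ℝ} (hf : RPoly f) {c : ℝ} (hc : 0 < c) (d : ℝ) :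
    Tendsto (fun t : ℝ => f t * Real.exp (-c * (t - d) ^ 2)) atBot (nhds 0) := by
  obtain ⟨p, hp⟩ := hf
  have hf' : RPoly (fun s : ℝ => f (-s)) :=
    ⟨p.comp (-Polynomial.X), fun s => by simp [Polynomial.eval_comp, hp]⟩
  have h := (rpoly_gauss_tendsto_atTop hf' hc (-d)).comp tendsto_neg_atBot_atTop
  refine h.congr fun t => ?_
  simp only [Function.comp_apply, neg_neg]
  rw [show ((-t : ℝ) - -d) ^ 2 = (t - d) ^ 2 by ring]

lemma stein {f f' : ℝ → ℝ} (hd : ∀ t, HasDerivAt f (f' t) t) (hf : RPoly f) (hf' : RPoly f')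
    {c : ℝ} (hc : 0 < c) (d : ℝ) :
    ∫ t : ℝ, f' t * Real.exp (-c * (t - d) ^ 2)
      = 2 * c * ∫ t : ℝ, (t - d) * f t * Real.exp (-c * (t - d) ^ 2) := by
  set W := fun t : ℝ => Real.exp (-c * (t - d) ^ 2) with hWdef
  have hW : ∀ t, HasDerivAt W (Real.exp (-c * (t - d) ^ 2) * (-c * (2 * (t - d)))) t := by
    intro t
    have h0 : HasDerivAt (fun t : ℝ => -c * (t - d) ^ 2) (-c * (2 * (t - d))) t := by
      have h2 := (((hasDerivAt_id t).sub_const d).pow 2).const_mul (-c)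
      have h3 : HasDerivAt (fun t : ℝ => -c * (t - d) ^ 2) (-c * (((2:ℕ):ℝ) * (id t - d) ^ (2 - 1) * 1)) t := h2
      convert h3 using 1; norm_num
    exact h0.exp
  have hg : RPoly (fun t => (t - d) * f t) := (RPoly.linear d).mul hf
  have hFd : ∀ t, HasDerivAt (fun t => f t * W t)
      (f' t * W t + (-2 * c) * ((t - d) * f t * W t)) t := by
    intro t
    exact ((hd t).mul (hW t)).congr_deriv (by simp only [hWdef]; ring)
  have h1 : Integrable (fun t => f' t * W t) := rpoly_gauss_integrable hf' hc d
  have h2 : Integrable (fun t => (-2 * c) * ((t - d) * f t * W t)) :=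
    (rpoly_gauss_integrable hg hc d).const_mul _
  have hzero : (∫ t : ℝ, (f' t * W t + (-2 * c) * ((t - d) * f t * W t))) = 0 := by
    rw [MeasureTheory.integral_of_hasDerivAt_of_tendsto hFd (h1.add h2)
      (rpoly_gauss_tendsto_atBot hf hc d) (rpoly_gauss_tendsto_atTop hf hc d)]
    simp
  rw [integral_add h1 h2, integral_const_mul] at hzero
  have : ∫ t : ℝ, (t - d) * f t * W t = ∫ t : ℝ, (t - d) * f t * Real.exp (-c * (t - d) ^ 2) := rfl
  linarith [hzero]

lemma gauss_integral (c d : ℝ) :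
    ∫ t : ℝ, Real.exp (-c * (t - d) ^ 2) = Real.sqrt (Real.pi / c) := by
  have h := MeasureTheory.integral_sub_right_eq_self (μ := volume) (fun x : ℝ => Real.exp (-c * x ^ 2)) d
  rw [show (∫ t : ℝ, Real.exp (-c * (t - d) ^ 2))
    = ∫ x : ℝ, (fun x : ℝ => Real.exp (-c * x ^ 2)) (x - d) from rfl, h, integral_gaussian]

section K
open MeasureTheory Real Filter

noncomputable def Kint (m n : ℕ) : ℝ :=
  ∫ t : ℝ, He m t * He n t * Real.exp (-(1/2 : ℝ) * (t - 0) ^ 2)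

lemma Kint_integrable (m n : ℕ) :
    Integrable fun t : ℝ => He m t * He n t * Real.exp (-(1/2 : ℝ) * (t - 0) ^ 2) :=
  rpoly_gauss_integrable ((He_rpoly m).mul (He_rpoly n)) (by norm_num) 0

lemma Kint_rec (m n : ℕ) : Kint (m + 1) n = n * Kint m (n - 1) := by
  set W := fun t : ℝ => Real.exp (-(1/2 : ℝ) * (t - 0) ^ 2) with hWdef
  have hc : (0:ℝ) < 1/2 := by norm_num
  -- Stein's identity for f = He m * He n
  have hst := stein (f := fun t => He m t * He n t)
      (f' := fun t => m * He (m-1) t * He n t + He m t * (n * He (n-1) t))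
      (fun t => (He_hasDerivAt m t).mul (He_hasDerivAt n t))
      ((He_rpoly m).mul (He_rpoly n))
      ((((He_rpoly (m-1)).const_mul m).mul (He_rpoly n)).add
        ((He_rpoly m).mul ((He_rpoly (n-1)).const_mul n)))
      hc 0
  have hint1 : Integrable (fun t : ℝ => (m : ℝ) * He (m-1) t * He n t * W t) := by
    have := rpoly_gauss_integrable (((He_rpoly (m-1)).const_mul m).mul (He_rpoly n)) hc 0
    exact this
  have hint2 : Integrable (fun t : ℝ => He m t * ((n : ℝ) * He (n-1) t) * W t) := by
    have := rpoly_gauss_integrable ((He_rpoly m).mul ((He_rpoly (n-1)).const_mul n)) hc 0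
    exact this
  have hsum : (∫ t : ℝ, ((m : ℝ) * He (m-1) t * He n t + He m t * ((n : ℝ) * He (n-1) t)) * W t)
      = (m : ℝ) * Kint (m-1) n + (n : ℝ) * Kint m (n-1) := by
    have e : (fun t : ℝ => ((m : ℝ) * He (m-1) t * He n t + He m t * ((n : ℝ) * He (n-1) t)) * W t)
        = fun t => (m : ℝ) * He (m-1) t * He n t * W t + He m t * ((n : ℝ) * He (n-1) t) * W t :=
      funext fun t => by ring
    rw [e, integral_add hint1 hint2]
    unfold Kint
    rw [← integral_const_mul, ← integral_const_mul]
    congr 1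
    · exact congrArg _ (funext fun t => by ring)
    · exact congrArg _ (funext fun t => by ring)
  -- the "t * He m * He n" integral
  have htmul : (∫ t : ℝ, t * He m t * He n t * W t)
      = (m : ℝ) * Kint (m-1) n + (n : ℝ) * Kint m (n-1) := by
    rw [← hsum]
    have := hst
    rw [this]
    rw [show (2 : ℝ) * (1/2) = 1 by norm_num, one_mul]
    exact congrArg _ (funext fun t => by ring)
  -- expand He (m+1)
  have hints : Integrable (fun t : ℝ => t * He m t * He n t * W t) :=
    rpoly_gauss_integrable ((RPoly.id'.mul (He_rpoly m)).mul (He_rpoly n)) hc 0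
  have hintm : Integrable (fun t : ℝ => (m : ℝ) * (He (m-1) t * He n t * W t)) :=
    (Kint_integrable (m-1) n).const_mul _
  have hexp : Kint (m+1) n = (∫ t : ℝ, t * He m t * He n t * W t)
      - (m : ℝ) * Kint (m-1) n := by
    unfold Kint
    have e : (fun t : ℝ => He (m+1) t * He n t * W t)
        = fun t : ℝ => t * He m t * He n t * W t - (m : ℝ) * (He (m-1) t * He n t * W t) :=
      funext fun t => by rw [He_succ m t]; ring
    rw [e, integral_sub hints hintm, integral_const_mul]
  rw [hexp, htmul]
  ring

lemma Kint_symm (m n : ℕ) : Kint m n = Kint n m := by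
  unfold Kint; exact congrArg _ (funext fun t => by ring)

lemma Kint_zero_zero : Kint 0 0 = Real.sqrt (2 * Real.pi) := by
  unfold Kint
  have : (fun t : ℝ => He 0 t * He 0 t * Real.exp (-(1/2 : ℝ) * (t - 0) ^ 2))
      = fun t : ℝ => Real.exp (-(1/2 : ℝ) * (t - 0) ^ 2) := funext fun t => by simp [He]
  rw [this, gauss_integral]
  rw [show (Real.pi / (1/2 : ℝ)) = 2 * Real.pi by ring]
lemma Kint_diag (n : ℕ) : Kint n n = n.factorial * Real.sqrt (2 * Real.pi) := by
  induction n with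
  | zero => simpa using Kint_zero_zero
  | succ k ih =>
      have h := Kint_rec k (k + 1)
      simp only [Nat.add_sub_cancel] at h
      rw [h, ih, Nat.factorial_succ]
      push_cast
      ring

lemma Kint_above (k : ℕ) : ∀ m : ℕ, Kint (m + k + 1) m = 0 := by
  intro m
  induction m with
  | zero => simpa using Kint_rec k 0
  | succ j ihj =>
      have h := Kint_rec (j + k + 1) (j + 1)
      have e : j + 1 + k + 1 = (j + k + 1) + 1 := by ring
      rw [e, h]
      simp [ihj]

lemma Kint_ne {m n : ℕ} (h : m ≠ n) : Kint m n = 0 := by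
  rcases Nat.lt_or_ge n m with hlt | hge
  · obtain ⟨k, rfl⟩ : ∃ k, m = n + k + 1 := ⟨m - n - 1, by omega⟩
    exact Kint_above k n
  · have hlt : m < n := by omega
    obtain ⟨k, rfl⟩ : ∃ k, n = m + k + 1 := ⟨n - m - 1, by omega⟩
    rw [Kint_symm]; exact Kint_above k m

end K

section J
open MeasureTheory Real Filter

noncomputable def Jint (x v : ℝ) (n : ℕ) : ℝ :=
  ∫ t : ℝ, He n t * Real.exp (-(1/(2*(1-v^2))) * (t - x*v) ^ 2)

lemma one_sub_sq_pos {v : ℝ} (hv : v^2 < 1) : (0:ℝ) < 1 - v^2 := by linarith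

lemma cJ_pos {v : ℝ} (hv : v^2 < 1) : (0:ℝ) < 1/(2*(1-v^2)) := by
  have := one_sub_sq_pos hv; positivity

lemma Jint_integrable (x v : ℝ) (hv : v^2 < 1) (n : ℕ) :
    Integrable fun t : ℝ => He n t * Real.exp (-(1/(2*(1-v^2))) * (t - x*v) ^ 2) :=
  rpoly_gauss_integrable (He_rpoly n) (cJ_pos hv) (x*v)

lemma Jint_zero (x v : ℝ) (hv : v^2 < 1) :
    Jint x v 0 = Real.sqrt (2*Real.pi*(1-v^2)) := by
  unfold Jint
  have e : (fun t : ℝ => He 0 t * Real.exp (-(1/(2*(1-v^2))) * (t - x*v) ^ 2))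
      = fun t : ℝ => Real.exp (-(1/(2*(1-v^2))) * (t - x*v) ^ 2) := funext fun t => by simp [He]
  rw [e, gauss_integral]
  congr 1
  have h := (one_sub_sq_pos hv).ne'
  field_simp

lemma Jint_tshift (x v : ℝ) (hv : v^2 < 1) (n : ℕ) :
    (∫ t : ℝ, t * He n t * Real.exp (-(1/(2*(1-v^2))) * (t - x*v) ^ 2))
      = x*v * Jint x v n + (1-v^2) * (n * Jint x v (n-1)) := by
  set c : ℝ := 1/(2*(1-v^2)) with hcdef
  set d : ℝ := x*v with hddef
  have hc := cJ_pos hv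
  have hs := one_sub_sq_pos hv
  have hst := stein (f := He n) (f' := fun t => (n:ℝ) * He (n-1) t)
      (He_hasDerivAt n) (He_rpoly n) ((He_rpoly (n-1)).const_mul n) hc d
  -- hst : ∫ n * He (n-1) t * W = 2*c*∫ (t-d) * He n t * W
  have hL : (∫ t : ℝ, (n:ℝ) * He (n-1) t * Real.exp (-c * (t - d) ^ 2))
      = (n:ℝ) * Jint x v (n-1) := by
    unfold Jint
    rw [← integral_const_mul]
    exact congrArg _ (funext fun t => by ring)
  have hsub : (∫ t : ℝ, (t - d) * He n t * Real.exp (-c * (t - d) ^ 2))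
      = (1-v^2) * ((n:ℝ) * Jint x v (n-1)) := by
    rw [hL] at hst
    have hne : (1:ℝ) - v^2 ≠ 0 := hs.ne'
    have h2c : (2:ℝ) * c = (1-v^2)⁻¹ := by
      rw [hcdef]; field_simp
    rw [h2c] at hst
    rw [hst, ← mul_assoc, mul_inv_cancel₀ hne, one_mul]
  have hsplit : (∫ t : ℝ, t * He n t * Real.exp (-c * (t - d) ^ 2))
      = (∫ t : ℝ, (t - d) * He n t * Real.exp (-c * (t - d) ^ 2))
        + d * ∫ t : ℝ, He n t * Real.exp (-c * (t - d) ^ 2) := by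
    have hi1 : Integrable (fun t : ℝ => (t - d) * He n t * Real.exp (-c * (t - d) ^ 2)) :=
      rpoly_gauss_integrable ((RPoly.linear d).mul (He_rpoly n)) hc d
    have hi2 : Integrable (fun t : ℝ => d * (He n t * Real.exp (-c * (t - d) ^ 2))) :=
      (Jint_integrable x v hv n).const_mul d
    rw [← integral_const_mul, ← integral_add hi1 hi2]
    exact congrArg _ (funext fun t => by ring)
  rw [hsplit, hsub]
  unfold Jint
  ring

lemma Jint_rec (x v : ℝ) (hv : v^2 < 1) (n : ℕ) :
    Jint x v (n+1) = x*v * Jint x v n - (n:ℝ) * v^2 * Jint x v (n-1) := by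
  set c : ℝ := 1/(2*(1-v^2)) with hcdef
  set d : ℝ := x*v with hddef
  have hc := cJ_pos hv
  have hexp : Jint x v (n+1) = (∫ t : ℝ, t * He n t * Real.exp (-c * (t - d) ^ 2))
      - (n:ℝ) * Jint x v (n-1) := by
    unfold Jint
    have hi1 : Integrable (fun t : ℝ => t * He n t * Real.exp (-c * (t - d) ^ 2)) :=
      rpoly_gauss_integrable (RPoly.id'.mul (He_rpoly n)) hc d
    have hi2 : Integrable (fun t : ℝ => (n:ℝ) * (He (n-1) t * Real.exp (-c * (t - d) ^ 2))) :=
      (Jint_integrable x v hv (n-1)).const_mul _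
    rw [← integral_const_mul, ← integral_sub hi1 hi2]
    exact congrArg _ (funext fun t => by rw [He_succ n t]; ring)
  rw [hexp, Jint_tshift x v hv n]
  ring

lemma Jint_val (x v : ℝ) (hv : v^2 < 1) :
    ∀ n, Jint x v n = Real.sqrt (2*Real.pi*(1-v^2)) * (He n x * v^n) := by
  have key : ∀ n, Jint x v n = Real.sqrt (2*Real.pi*(1-v^2)) * (He n x * v^n) ∧
      Jint x v (n+1) = Real.sqrt (2*Real.pi*(1-v^2)) * (He (n+1) x * v^(n+1)) := by
    intro n
    induction n with
    | zero =>
        constructor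
        · simpa [He] using Jint_zero x v hv
        · have h := Jint_rec x v hv 0
          simp only [Nat.cast_zero, zero_mul, sub_zero, Nat.zero_sub, zero_add] at h
          rw [h, Jint_zero x v hv]
          simp [He]
          ring
    | succ k ihk =>
        refine ⟨ihk.2, ?_⟩
        have h := Jint_rec x v hv (k+1)
        simp only [Nat.add_sub_cancel] at h
        rw [h, ihk.1, ihk.2, He_succ (k+1) x]
        simp only [Nat.add_sub_cancel]
        push_cast
        ring
  exact fun n => (key n).1

end J

section Bessel
open MeasureTheory Real Filter Finset

lemma sqrt_div_pos (a b : ℝ) (ha : 0 ≤ a) (hb : 0 < b) :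
    Real.sqrt a / b = Real.sqrt (a / b^2) := by
  rw [Real.sqrt_div ha, Real.sqrt_sq hb.le]

lemma onevar' (x v : ℝ) (hv : v^2 < 1) (N : ℕ) :
    ∑ n ∈ Finset.range (N+1), (He n x)^2 * v^(2*n) / n.factorial
      ≤ (Real.sqrt ((1-v^2)*(1+v^2)))⁻¹ * Real.exp (x^2*v^2/(1+v^2)) := by
  have hs : (0:ℝ) < 1 - v^2 := by linarith
  have hp : (0:ℝ) < 1 + v^2 := by positivity
  have hπ : (0:ℝ) < Real.pi := Real.pi_pos
  set γ : ℝ → ℝ := fun t => Real.exp (-(1/2 : ℝ) * (t - 0) ^ 2) with hγdef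
  set W : ℝ → ℝ := fun t => Real.exp (-(1/(2*(1-v^2))) * (t - x*v) ^ 2) with hWdef
  set s2 : ℝ := Real.sqrt (2*Real.pi) with hs2def
  set Z1 : ℝ := Real.sqrt (2*Real.pi*(1-v^2)) with hZ1def
  have hs2pos : 0 < s2 := Real.sqrt_pos.2 (by positivity)
  have hZ1pos : 0 < Z1 := Real.sqrt_pos.2 (by positivity)
  have hs2sq : s2^2 = 2*Real.pi := Real.sq_sqrt (by positivity)
  have hZ1sq : Z1^2 = 2*Real.pi*(1-v^2) := Real.sq_sqrt (by positivity)
  set cn : ℕ → ℝ := fun n => He n x * v^n with hcndef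
  set P : ℝ → ℝ := fun t => ∑ n ∈ Finset.range (N+1), (cn n / n.factorial) * He n t with hPdef
  set S : ℝ := ∑ n ∈ Finset.range (N+1), (cn n)^2 / n.factorial with hSdef
  have hPrp : RPoly P := RPoly.sum fun n _ => (He_rpoly n).const_mul _
  have hγpos : ∀ t, 0 < γ t := fun t => Real.exp_pos _
  have hWc : (0:ℝ) < 1/(2*(1-v^2)) := by positivity
  set α : ℝ := (1+v^2)/(2*(1-v^2)) with hαdef
  have hα : 0 < α := by positivity
  set e : ℝ := 2*(x*v)/(1+v^2) with hedef
  set R : ℝ := x^2*v^2/(1+v^2) with hRdef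
  -- pointwise squared-density identity
  have hW2 : ∀ t, (γ t)⁻¹ * (W t)^2 = Real.exp R * Real.exp (-α * (t - e)^2) := by
    intro t
    have hgen : ∀ A B : ℝ, (Real.exp A)⁻¹ * (Real.exp B)^2 = Real.exp (2*B - A) := by
      intro A B
      rw [← Real.exp_neg, pow_two, ← Real.exp_add, ← Real.exp_add]
      congr 1
      ring
    rw [hγdef, hWdef]
    simp only []
    rw [hgen, ← Real.exp_add]
    congr 1
    rw [hαdef, hedef, hRdef]
    field_simp
    ring
  -- the three component functions
  set E1 : ℝ → ℝ := fun t => (s2^2/Z1^2) * ((γ t)⁻¹ * (W t)^2) with hE1def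
  set E2 : ℝ → ℝ := fun t => 2*(s2/Z1) * (P t * W t) with hE2def
  set E3 : ℝ → ℝ := fun t => (P t)^2 * γ t with hE3def
  -- integrability
  have hQint : Integrable (fun t : ℝ => Real.exp (-α * (t - e)^2)) := by
    have := rpoly_gauss_integrable (RPoly.const 1) hα e
    simpa using this
  have hE1int : Integrable E1 := by
    have : E1 = fun t => (s2^2/Z1^2) * (Real.exp R * Real.exp (-α * (t - e)^2)) := by
      funext t; rw [hE1def]; simp only []; rw [hW2 t]
    rw [this]
    exact ((hQint.const_mul _).const_mul _)
  have hPW : Integrable (fun t => P t * W t) := rpoly_gauss_integrable hPrp hWc (x*v)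
  have hE2int : Integrable E2 := hPW.const_mul _
  have hE3int : Integrable E3 := by
    have : E3 = fun t => (fun t => P t * P t) t * γ t := by
      funext t; rw [hE3def]; simp only []; ring
    rw [this]
    exact rpoly_gauss_integrable (hPrp.mul hPrp) (by norm_num) 0
  -- value of ∫ E1
  have hE1val : ∫ t : ℝ, E1 t = (s2^2/Z1^2) * Real.exp R * Real.sqrt (Real.pi/α) := by
    have h1 : E1 = fun t => ((s2^2/Z1^2) * Real.exp R) * Real.exp (-α * (t - e)^2) := by
      funext t; rw [hE1def]; simp only []; rw [hW2 t]; ring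
    rw [h1, integral_const_mul, gauss_integral]
  -- value of ∫ E2
  have hfac : ∀ n : ℕ, ((n.factorial : ℝ)) ≠ 0 := fun n => Nat.cast_ne_zero.2 n.factorial_ne_zero
  have hPWval : ∫ t : ℝ, P t * W t = Z1 * S := by
    have h1 : (fun t => P t * W t)
        = fun t => ∑ n ∈ Finset.range (N+1), (cn n / n.factorial) * (He n t * W t) := by
      funext t; rw [hPdef]; simp only []
      rw [Finset.sum_mul]
      exact Finset.sum_congr rfl fun n _ => by ring
    rw [h1, integral_finset_sum _ (fun n _ => (Jint_integrable x v hv n).const_mul _)]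
    have h2 : ∀ n ∈ Finset.range (N+1),
        (∫ t : ℝ, (cn n / n.factorial) * (He n t * W t)) = Z1 * ((cn n)^2 / n.factorial) := by
      intro n _
      rw [integral_const_mul]
      have : (∫ t : ℝ, He n t * W t) = Jint x v n := rfl
      rw [this, Jint_val x v hv n, ← hZ1def]
      have hcnn : He n x * v^n = cn n := rfl
      rw [hcnn]
      field_simp [hfac n]
    rw [Finset.sum_congr rfl h2, ← Finset.mul_sum]
  have hE2val : ∫ t : ℝ, E2 t = 2 * s2 * S := by
    have h1 : E2 = fun t => (2*(s2/Z1)) * (P t * W t) := rfl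
    rw [h1, integral_const_mul, hPWval]
    field_simp [hZ1pos.ne']
  -- value of ∫ E3
  have hE3val : ∫ t : ℝ, E3 t = s2 * S := by
    have h1 : E3 = fun t => ∑ m ∈ Finset.range (N+1), ∑ n ∈ Finset.range (N+1),
        ((cn m / m.factorial) * (cn n / n.factorial)) * (He m t * He n t * γ t) := by
      funext t; rw [hE3def, hPdef]; simp only []
      rw [pow_two, Finset.sum_mul_sum, Finset.sum_mul]
      exact Finset.sum_congr rfl fun m _ => by
        rw [Finset.sum_mul]
        exact Finset.sum_congr rfl fun n _ => by ring
    rw [h1, integral_finset_sum _ (fun m _ => integrable_finset_sum _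
      (fun n _ => (Kint_integrable m n).const_mul _))]
    have h2 : ∀ m ∈ Finset.range (N+1),
        (∫ t : ℝ, ∑ n ∈ Finset.range (N+1),
          ((cn m / m.factorial) * (cn n / n.factorial)) * (He m t * He n t * γ t))
        = s2 * ((cn m)^2 / m.factorial) := by
      intro m hm
      rw [integral_finset_sum _ (fun n _ => (Kint_integrable m n).const_mul _)]
      have h3 : ∀ n ∈ Finset.range (N+1),
          (∫ t : ℝ, ((cn m / m.factorial) * (cn n / n.factorial)) * (He m t * He n t * γ t))
          = ((cn m / m.factorial) * (cn n / n.factorial)) * Kint m n := by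
        intro n _
        rw [integral_const_mul]
        rfl
      rw [Finset.sum_congr rfl h3]
      rw [Finset.sum_eq_single_of_mem m hm (fun n _ hne => by rw [Kint_ne hne.symm, mul_zero])]
      rw [Kint_diag m]
      rw [hs2def]
      field_simp
    rw [Finset.sum_congr rfl h2, ← Finset.mul_sum]
  -- Bessel inequality
  have hDeq : ∀ t, (Z1⁻¹ * s2 * W t - P t * γ t)^2 * (γ t)⁻¹ = E1 t - E2 t + E3 t := by
    intro t
    rw [hE1def, hE2def, hE3def]
    simp only []
    field_simp [(hγpos t).ne']
    ring
  have hpos : 0 ≤ ∫ t : ℝ, (E1 t - E2 t + E3 t) :=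
    integral_nonneg fun t => (hDeq t) ▸ (by positivity)
  have h12 : Integrable (fun t => E1 t - E2 t) := hE1int.sub hE2int
  have heq : ∫ t : ℝ, (E1 t - E2 t + E3 t)
      = (∫ t : ℝ, E1 t) - (∫ t : ℝ, E2 t) + ∫ t : ℝ, E3 t := by
    have ha := integral_add h12 hE3int
    have hb := integral_sub hE1int hE2int
    rw [ha, hb]
  rw [heq, hE1val, hE2val, hE3val] at hpos
  -- conclude: s2 * S ≤ ∫ E1
  have hkey : s2 * S ≤ (s2^2/Z1^2) * Real.exp R * Real.sqrt (Real.pi/α) := by linarith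
  have hSle : S ≤ (s2^2/Z1^2) * Real.sqrt (Real.pi/α) / s2 * Real.exp R := by
    calc S = s2 * S / s2 := by field_simp
      _ ≤ ((s2^2/Z1^2) * Real.exp R * Real.sqrt (Real.pi/α)) / s2 :=
          (div_le_div_iff_of_pos_right hs2pos).2 hkey
      _ = (s2^2/Z1^2) * Real.sqrt (Real.pi/α) / s2 * Real.exp R := by ring
  -- final sqrt algebra
  have hfinal : (s2^2/Z1^2) * Real.sqrt (Real.pi/α) / s2
      = (Real.sqrt ((1-v^2)*(1+v^2)))⁻¹ := by
    have harg : (Real.pi/α)/(2*Real.pi) = (1-v^2)/(1+v^2) := by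
      rw [hαdef]; field_simp
    have h2 : Real.sqrt (Real.pi/α) / s2 = Real.sqrt ((1-v^2)/(1+v^2)) := by
      rw [hs2def, ← Real.sqrt_div (by positivity), harg]
    calc (s2^2/Z1^2) * Real.sqrt (Real.pi/α) / s2
        = (s2^2/Z1^2) * (Real.sqrt (Real.pi/α) / s2) := by ring
      _ = (1-v^2)⁻¹ * Real.sqrt ((1-v^2)/(1+v^2)) := by
          rw [h2, hs2sq, hZ1sq]; congr 1; field_simp
      _ = (Real.sqrt ((1-v^2)*(1+v^2)))⁻¹ := by
          refine eq_inv_of_mul_eq_one_left ?_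
          rw [mul_comm ((1-v^2)⁻¹) _]
          have hab : Real.sqrt ((1-v^2)/(1+v^2)) * Real.sqrt ((1-v^2)*(1+v^2)) = 1 - v^2 := by
            rw [← Real.sqrt_mul (by positivity),
              show ((1-v^2)/(1+v^2)) * ((1-v^2)*(1+v^2)) = (1-v^2)^2 from by field_simp,
              Real.sqrt_sq hs.le]
          rw [mul_right_comm, hab, mul_inv_cancel₀ hs.ne']
  have hLHS : ∑ n ∈ Finset.range (N+1), (He n x)^2 * v^(2*n) / n.factorial = S := by
    rw [hSdef, hcndef]
    exact Finset.sum_congr rfl fun n _ => by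
      simp only []
      rw [mul_pow, pow_mul]
      ring
  rw [hLHS, ← hfinal]
  exact hSle

end Bessel

section Final
open MeasureTheory Real Filter Finset

lemma onevar (x u : ℝ) (hu0 : 0 < u) (hu1 : u < 1) (N : ℕ) :
    ∑ n ∈ Finset.range (N+1), (He n x)^2 * u^n / n.factorial
      ≤ (Real.sqrt (1-u^2))⁻¹ * Real.exp (x^2*u/(1+u)) := by
  set v := Real.sqrt u with hvdef
  have hv2 : v^2 = u := Real.sq_sqrt hu0.le
  have hv : v^2 < 1 := by rw [hv2]; exact hu1
  have h := onevar' x v hv N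
  simp only [pow_mul, hv2] at h
  rw [show (1-u)*(1+u) = 1-u^2 by ring] at h
  exact h


end Final

/-- bound on the degree-`l` slice of the multivariate Mehler sum. -/
theorem stmt8 (m l : ℕ) (hm : 1 ≤ m) (y : Fin m → ℝ) (u : ℝ) (hu0 : 0 < u) (hu1 : u < 1) :
    ∑ a ∈ Finset.Nat.antidiagonalTuple m l,
        (∏ i, He (a i) (y i)) ^ 2 / (l.factorial : ℝ)
      ≤ (u ^ l)⁻¹ * (1 - u ^ 2) ^ (-(m : ℝ) / 2)
          * Real.exp (u * (∑ i, (y i) ^ 2) / (1 + u)) := by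
  classical
  have h1u : (0:ℝ) < 1 - u^2 := by nlinarith
  have hul : (0:ℝ) < u ^ l := by positivity
  set g : Fin m → ℕ → ℝ := fun i n => (He n (y i))^2 * u^n / n.factorial with hgdef
  have hgnn : ∀ i n, 0 ≤ g i n := fun i n => by
    rw [hgdef]; have : (0:ℝ) < n.factorial := by exact_mod_cast n.factorial_pos
    positivity
  -- termwise bound on the antidiagonal
  have hterm : ∀ a ∈ Finset.Nat.antidiagonalTuple m l,
      (∏ i, He (a i) (y i)) ^ 2 / (l.factorial : ℝ) ≤ (u ^ l)⁻¹ * ∏ i, g (i) (a i) := by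
    intro a ha
    have hsum : ∑ i, a i = l := Finset.Nat.mem_antidiagonalTuple.mp ha
    have hpfpos : (0:ℝ) < ∏ i, ((a i).factorial : ℝ) := by
      apply Finset.prod_pos; intro i _; exact_mod_cast (a i).factorial_pos
    have hpf : (∏ i, ((a i).factorial : ℝ)) ≤ (l.factorial : ℝ) := by
      have hdvd := Nat.prod_factorial_dvd_factorial_sum Finset.univ a
      rw [hsum] at hdvd
      have := Nat.le_of_dvd l.factorial_pos hdvd
      calc (∏ i, ((a i).factorial : ℝ)) = ((∏ i, (a i).factorial : ℕ) : ℝ) := by push_cast; rfl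
        _ ≤ (l.factorial : ℝ) := by exact_mod_cast this
    have hprodg : ∏ i, g i (a i)
        = (∏ i, He (a i) (y i))^2 * u^l / ∏ i, ((a i).factorial : ℝ) := by
      rw [hgdef]
      simp only []
      rw [Finset.prod_div_distrib, Finset.prod_mul_distrib, Finset.prod_pow,
        Finset.prod_pow_eq_pow_sum, hsum]
    rw [hprodg]
    rw [show (u^l)⁻¹ * ((∏ i, He (a i) (y i))^2 * u^l / ∏ i, ((a i).factorial : ℝ))
        = (∏ i, He (a i) (y i))^2 / ∏ i, ((a i).factorial : ℝ) from by
      field_simp]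
    exact div_le_div_of_nonneg_left (by positivity) hpfpos hpf
  -- sum over antidiagonal ≤ (u^l)⁻¹ * sum over the box
  have hstep1 : ∑ a ∈ Finset.Nat.antidiagonalTuple m l,
      (∏ i, He (a i) (y i)) ^ 2 / (l.factorial : ℝ)
      ≤ (u ^ l)⁻¹ * ∑ a ∈ Finset.Nat.antidiagonalTuple m l, ∏ i, g i (a i) := by
    rw [Finset.mul_sum]
    exact Finset.sum_le_sum hterm
  have hsubset : Finset.Nat.antidiagonalTuple m l
      ⊆ Fintype.piFinset (fun _ : Fin m => Finset.range (l+1)) := by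
    intro a ha
    have hsum : ∑ i, a i = l := Finset.Nat.mem_antidiagonalTuple.mp ha
    rw [Fintype.mem_piFinset]
    intro i
    rw [Finset.mem_range]
    have : a i ≤ l := hsum ▸ Finset.single_le_sum (fun j _ => Nat.zero_le _) (Finset.mem_univ i)
    omega
  have hstep2 : ∑ a ∈ Finset.Nat.antidiagonalTuple m l, ∏ i, g i (a i)
      ≤ ∑ a ∈ Fintype.piFinset (fun _ : Fin m => Finset.range (l+1)), ∏ i, g i (a i) :=
    Finset.sum_le_sum_of_subset_of_nonneg hsubset
      (fun a _ _ => Finset.prod_nonneg fun i _ => hgnn i (a i))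
  have hstep3 : ∑ a ∈ Fintype.piFinset (fun _ : Fin m => Finset.range (l+1)), ∏ i, g i (a i)
      = ∏ i, ∑ n ∈ Finset.range (l+1), g i n :=
    (Finset.prod_univ_sum _ _).symm
  set B : Fin m → ℝ := fun i => (Real.sqrt (1-u^2))⁻¹ * Real.exp ((y i)^2*u/(1+u)) with hBdef
  have hstep4 : ∏ i, ∑ n ∈ Finset.range (l+1), g i n ≤ ∏ i, B i := by
    apply Finset.prod_le_prod
    · intro i _; exact Finset.sum_nonneg fun n _ => hgnn i n
    · intro i _; exact onevar (y i) u hu0 hu1 l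
  have hprodB : ∏ i, B i = (1 - u ^ 2) ^ (-(m : ℝ) / 2)
      * Real.exp (u * (∑ i, (y i) ^ 2) / (1 + u)) := by
    rw [hBdef]
    rw [Finset.prod_mul_distrib, Finset.prod_const, ← Real.exp_sum]
    congr 1
    · -- ((√(1-u²))⁻¹)^m = (1-u²)^(-(m:ℝ)/2)
      rw [Real.sqrt_eq_rpow, ← Real.rpow_neg h1u.le]
      simp only [Finset.card_univ, Fintype.card_fin]
      rw [← Real.rpow_natCast ((1-u^2) ^ (-(1/2):ℝ)) m, ← Real.rpow_mul h1u.le]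
      congr 1
      push_cast
      ring
    · rw [Finset.sum_congr rfl (fun i _ => by rw [show (y i)^2*u/(1+u) = u*(y i)^2/(1+u) from by ring])]
      rw [← Finset.sum_div, ← Finset.mul_sum]
  calc ∑ a ∈ Finset.Nat.antidiagonalTuple m l, (∏ i, He (a i) (y i)) ^ 2 / (l.factorial : ℝ)
      ≤ (u ^ l)⁻¹ * ∑ a ∈ Finset.Nat.antidiagonalTuple m l, ∏ i, g i (a i) := hstep1
    _ ≤ (u ^ l)⁻¹ * ∏ i, B i := by
        apply mul_le_mul_of_nonneg_left _ (by positivity)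
        rw [← hstep3] at hstep4
        exact le_trans hstep2 hstep4
    _ = (u ^ l)⁻¹ * (1 - u ^ 2) ^ (-(m : ℝ) / 2)
          * Real.exp (u * (∑ i, (y i) ^ 2) / (1 + u)) := by rw [hprodB]; ring
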